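/- arXiv:1810.07793 — 2 statements merged into one kernel-verified Lean document; each statement's English description precedes it below -/
import Mathlib

section
/- Let α be a probability measure on ℝ with continuous density f, let ε > 0, and let x < x' with x + ε ≤ x' − ε, f(x) ≠ 0, f(x') ≠ 0. Then d_α^{(ε)}(x, x') = (x' − x) + H(x) − H(x'), where H(y) = (∫_{y−ε}^{y+ε} ∫_{y−ε}^{t} f(s) ds dt) / (∫_{y−ε}^{y+ε} f(s) ds). -/
open MeasureTheory Metric Set Filter

/-- The ℓ¹-Wasserstein distance: infimum over couplings of the expected distance. -/
noncomputable def wassersteinDist {X : Type*} [MeasurableSpace X] [PseudoMetricSpace X]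
    (α β : Measure X) : ℝ :=
  sInf ((fun μ : Measure (X × X) => ∫ p, dist p.1 p.2 ∂μ) ''
    {μ : Measure (X × X) | μ.map Prod.fst = α ∧ μ.map Prod.snd = β})

/-- The (one-sided) Prokhorov distance between Borel probability measures. -/
noncomputable def prokhorovDist {X : Type*} [MeasurableSpace X] [PseudoMetricSpace X]
    (α β : Measure X) : ℝ :=
  sInf {δ : ℝ | 0 < δ ∧ ∀ A : Set X, α A ≤ β (thickening δ A) + ENNReal.ofReal δ}

/-- ε-local truncation of α at x: restrict to the closed ε-ball and renormalize. -/
noncomputable def localTrunc {X : Type*} [MeasurableSpace X] [PseudoMetricSpace X]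
    (α : Measure X) (ε : ℝ) (x : X) : Measure X :=
  (α (closedBall x ε))⁻¹ • α.restrict (closedBall x ε)

/-- The support of a measure: points all of whose neighborhoods have positive measure. -/
def msupport {X : Type*} [TopologicalSpace X] [MeasurableSpace X] (μ : Measure X) : Set X :=
  {x : X | ∀ U ∈ nhds x, 0 < μ U}

/-- The Λ-doubling condition for a Borel measure: for points in the support,
`α (closedBall x r₁) / α (closedBall x r₂) ≤ (r₁/r₂)^Λ` whenever `r₁ ≥ r₂ > 0`. -/
def DoublingCond {X : Type*} [MeasurableSpace X] [PseudoMetricSpace X]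
    (α : Measure X) (Λ : ℝ) : Prop :=
  ∀ x ∈ msupport α, ∀ r₁ r₂ : ℝ, r₂ ≤ r₁ → 0 < r₂ →
    α (closedBall x r₁) / α (closedBall x r₂) ≤ ENNReal.ofReal ((r₁ / r₂) ^ Λ)

/-- `ψ_{Λ,D}(r) = min(1, (r/D)^Λ)`. -/
noncomputable def psiLD (Λ D r : ℝ) : ℝ := min 1 ((r / D) ^ Λ)

/-- `Φ_{Λ,D,ε}(η) = η/ψ_{Λ,D}(ε) + ((1+η/ε)^Λ − 1)`. -/
noncomputable def PhiLDE (Λ D ε η : ℝ) : ℝ := η / psiLD Λ D ε + ((1 + η / ε) ^ Λ - 1)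

open intervalIntegral
open scoped NNReal ENNReal

private lemma aux_meas (f : ℝ → ℝ) (hcont : Continuous f) (hf0 : ∀ s, 0 ≤ f s)
    (y ε : ℝ) (hε : 0 ≤ ε) :
    (volume.withDensity fun s => ENNReal.ofReal (f s)) (closedBall y ε)
      = ENNReal.ofReal (∫ s in (y-ε)..(y+ε), f s) := by
  have hab : y - ε ≤ y + ε := by linarith
  rw [Real.closedBall_eq_Icc, withDensity_apply _ measurableSet_Icc,
    intervalIntegral.integral_of_le hab, ← MeasureTheory.integral_Icc_eq_integral_Ioc,
    ofReal_integral_eq_lintegral_ofReal]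
  · exact hcont.continuousOn.integrableOn_Icc
  · exact ae_of_all _ hf0

private lemma aux_pos (f : ℝ → ℝ) (hcont : Continuous f) (hf0 : ∀ s, 0 ≤ f s)
    {y : ℝ} (hy : f y ≠ 0) {ε : ℝ} (hε : 0 < ε) :
    0 < ∫ s in (y-ε)..(y+ε), f s := by
  rw [intervalIntegral.integral_pos_iff_support_of_nonneg_ae (ae_of_all _ hf0)
    (hcont.intervalIntegrable _ _)]
  refine ⟨by linarith, ?_⟩
  have h1 : 0 < volume (Function.support f ∩ Ioo (y-ε) (y+ε)) :=
    (hcont.isOpen_support.inter isOpen_Ioo).measure_pos volume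
      ⟨y, hy, by constructor <;> linarith⟩
  exact h1.trans_le (measure_mono (inter_subset_inter_right _ Ioo_subset_Ioc_self))

private lemma aux_ibp (f : ℝ → ℝ) (hcont : Continuous f) (a b : ℝ) :
    ∫ t in a..b, (∫ s in a..t, f s) = b * (∫ s in a..b, f s) - ∫ t in a..b, t * f t := by
  have hc2 : Continuous fun s : ℝ => s * f s := continuous_id.mul hcont
  have key : ∀ t ∈ uIcc a b, HasDerivAt
      (fun u => u * (∫ s in a..u, f s) - ∫ s in a..u, s * f s) (∫ s in a..t, f s) t := by
    intro t _
    have h1 : HasDerivAt (fun u => ∫ s in a..u, f s) (f t) t :=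
      intervalIntegral.integral_hasDerivAt_right (hcont.intervalIntegrable _ _)
        (hcont.stronglyMeasurableAtFilter _ _) hcont.continuousAt
    have h2 : HasDerivAt (fun u => ∫ s in a..u, s * f s) (t * f t) t :=
      intervalIntegral.integral_hasDerivAt_right (hc2.intervalIntegrable _ _)
        (hc2.stronglyMeasurableAtFilter _ _) hc2.continuousAt
    have h3 := ((hasDerivAt_id t).mul h1).sub h2
    exact h3.congr_deriv (by simp)
  have hInt : IntervalIntegrable (fun t => ∫ s in a..t, f s) volume a b :=
    (intervalIntegral.continuous_primitive (fun a b => hcont.intervalIntegrable a b)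
      a).intervalIntegrable a b
  rw [intervalIntegral.integral_eq_sub_of_hasDerivAt key hInt]
  simp

private lemma aux_mean (f : ℝ → ℝ) (hcont : Continuous f) (hf0 : ∀ s, 0 ≤ f s)
    {y : ℝ} (hy : f y ≠ 0) {ε : ℝ} (hε : 0 < ε) :
    ∫ t, t ∂(localTrunc (volume.withDensity fun s => ENNReal.ofReal (f s)) ε y)
      = (y + ε) - (∫ t in (y-ε)..(y+ε), ∫ s in (y-ε)..t, f s) /
          (∫ s in (y-ε)..(y+ε), f s) := by
  set a := y - ε with ha
  set b := y + ε with hb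
  have hab : a ≤ b := by simp [ha, hb]; linarith
  have hM : 0 < ∫ s in a..b, f s := aux_pos f hcont hf0 hy hε
  have hball : (volume.withDensity fun s => ENNReal.ofReal (f s)) (closedBall y ε)
      = ENNReal.ofReal (∫ s in a..b, f s) := aux_meas f hcont hf0 y ε hε.le
  have hres : ∫ t, t ∂((volume.withDensity fun s => ENNReal.ofReal (f s)).restrict
      (closedBall y ε)) = ∫ t in a..b, t * f t := by
    rw [Real.closedBall_eq_Icc, ← ha, ← hb]
    have hd : (fun s => ENNReal.ofReal (f s))
        = fun s => ((Real.toNNReal (f s) : ℝ≥0) : ENNReal) := rfl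
    rw [hd, setIntegral_withDensity_eq_setIntegral_smul (f := fun s => (f s).toNNReal)
      (measurable_real_toNNReal.comp hcont.measurable :
        Measurable fun s => (f s).toNNReal) _ measurableSet_Icc]
    rw [intervalIntegral.integral_of_le hab, ← MeasureTheory.integral_Icc_eq_integral_Ioc]
    congr 1
    funext t
    simp [NNReal.smul_def, Real.coe_toNNReal _ (hf0 t), mul_comm]
  rw [localTrunc, MeasureTheory.integral_smul_measure, hres, hball,
    ENNReal.toReal_inv, ENNReal.toReal_ofReal hM.le, smul_eq_mul,
    aux_ibp f hcont a b]
  field_simp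
  ring


/-- The exact formula in the proof of Remark 4 of the paper: for a probability measure α
on ℝ with continuous density f, ε > 0 and `x + ε ≤ x' − ε` with `f x ≠ 0 ≠ f x'`,
`d_α^{(ε)}(x,x') = (x'−x) + H(x) − H(x')`, where
`H(y) = (∫_{y−ε}^{y+ε} ∫_{y−ε}^{t} f(s) ds dt) / (∫_{y−ε}^{y+ε} f(s) ds)`. -/
theorem wasserstein_transform_exact_formula_on_R
    (f : ℝ → ℝ) (hcont : Continuous f) (hf0 : ∀ s, 0 ≤ f s)
    (α : Measure ℝ) (hα : α = MeasureTheory.volume.withDensity fun s => ENNReal.ofReal (f s))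
    [IsProbabilityMeasure α]
    (ε : ℝ) (hε : 0 < ε) (x x' : ℝ) (hxx : x < x') (hsep : x + ε ≤ x' - ε)
    (hfx : f x ≠ 0) (hfx' : f x' ≠ 0) :
    wassersteinDist (localTrunc α ε x) (localTrunc α ε x') =
      (x' - x) +
        (∫ t in (x - ε)..(x + ε), ∫ s in (x - ε)..t, f s) /
          (∫ s in (x - ε)..(x + ε), f s) -
        (∫ t in (x' - ε)..(x' + ε), ∫ s in (x' - ε)..t, f s) /
          (∫ s in (x' - ε)..(x' + ε), f s) := by
  subst hα
  set α := MeasureTheory.volume.withDensity fun s => ENNReal.ofReal (f s) with hαdef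
  set μα := localTrunc α ε x with hμα
  set μβ := localTrunc α ε x' with hμβ
  set mα := ∫ t, t ∂μα with hmα
  set mβ := ∫ t, t ∂μβ with hmβ
  -- basic measure facts
  have hballx : α (closedBall x ε) = ENNReal.ofReal (∫ s in (x-ε)..(x+ε), f s) :=
    aux_meas f hcont hf0 x ε hε.le
  have hballx' : α (closedBall x' ε) = ENNReal.ofReal (∫ s in (x'-ε)..(x'+ε), f s) :=
    aux_meas f hcont hf0 x' ε hε.le
  have hMx : 0 < ∫ s in (x-ε)..(x+ε), f s := aux_pos f hcont hf0 hfx hε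
  have hMx' : 0 < ∫ s in (x'-ε)..(x'+ε), f s := aux_pos f hcont hf0 hfx' hε
  have hA0 : α (closedBall x ε) ≠ 0 := by
    rw [hballx]; simpa using hMx
  have hB0 : α (closedBall x' ε) ≠ 0 := by
    rw [hballx']; simpa using hMx'
  have hAfin : α (closedBall x ε) ≠ ⊤ := measure_ne_top α _
  have hBfin : α (closedBall x' ε) ≠ ⊤ := measure_ne_top α _
  have probTrunc : ∀ (y : ℝ), α (closedBall y ε) ≠ 0 → IsProbabilityMeasure (localTrunc α ε y) := by
    intro y hy0
    constructor
    rw [localTrunc, Measure.smul_apply, Measure.restrict_apply_univ, smul_eq_mul]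
    exact ENNReal.inv_mul_cancel hy0 (measure_ne_top α _)
  haveI instα : IsProbabilityMeasure μα := probTrunc x hA0
  haveI instβ : IsProbabilityMeasure μβ := probTrunc x' hB0
  -- a.e. support facts and integrability for truncated measures
  have idInt : ∀ (y : ℝ), α (closedBall y ε) ≠ 0 → Integrable (id : ℝ → ℝ) (localTrunc α ε y) := by
    intro y hy0
    rw [localTrunc]
    refine (integrable_smul_measure (ENNReal.inv_ne_zero.2 (measure_ne_top α _))
      (ENNReal.inv_ne_top.2 hy0)).2 ?_
    refine Measure.integrableOn_of_bounded (measure_ne_top α _) aestronglyMeasurable_id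
      (M := |y| + ε) ?_
    refine ae_restrict_of_forall_mem measurableSet_closedBall (fun t ht => ?_)
    rw [Real.closedBall_eq_Icc] at ht
    rw [Real.norm_eq_abs, id]
    rcases abs_cases y with ⟨h, _⟩ | ⟨h, _⟩ <;>
      exact abs_le.2 ⟨by simp at ht ⊢; linarith [ht.1], by simp at ht ⊢; linarith [ht.2]⟩
  -- key: every coupling has the same transport cost
  have hval : ∀ μ : Measure (ℝ × ℝ), μ.map Prod.fst = μα → μ.map Prod.snd = μβ →
      ∫ p, dist p.1 p.2 ∂μ = mβ - mα := by
    intro μ h1 h2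
    have haemem : ∀ᵐ p : ℝ × ℝ ∂μ, p.1 ∈ closedBall x ε := by
      rw [ae_iff]
      have : μ (Prod.fst ⁻¹' (closedBall x ε)ᶜ) = 0 := by
        rw [← Measure.map_apply measurable_fst measurableSet_closedBall.compl, h1, hμα,
          localTrunc, Measure.smul_apply,
          Measure.restrict_apply measurableSet_closedBall.compl]
        simp
      exact this
    have haemem' : ∀ᵐ p : ℝ × ℝ ∂μ, p.2 ∈ closedBall x' ε := by
      rw [ae_iff]
      have : μ (Prod.snd ⁻¹' (closedBall x' ε)ᶜ) = 0 := by
        rw [← Measure.map_apply measurable_snd measurableSet_closedBall.compl, h2, hμβ,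
          localTrunc, Measure.smul_apply,
          Measure.restrict_apply measurableSet_closedBall.compl]
        simp
      exact this
    have hdist : ∀ᵐ p : ℝ × ℝ ∂μ, dist p.1 p.2 = p.2 - p.1 := by
      filter_upwards [haemem, haemem'] with p hp hp'
      rw [Real.closedBall_eq_Icc] at hp hp'
      rw [Real.dist_eq, abs_of_nonpos (by linarith [hp.2, hp'.1]), neg_sub]
    have hint1 : Integrable (fun p : ℝ × ℝ => p.1) μ := by
      have : Integrable (id : ℝ → ℝ) (μ.map Prod.fst) := by
        rw [h1]; exact idInt x hA0
      rwa [integrable_map_measure aestronglyMeasurable_id measurable_fst.aemeasurable] at this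
    have hint2 : Integrable (fun p : ℝ × ℝ => p.2) μ := by
      have : Integrable (id : ℝ → ℝ) (μ.map Prod.snd) := by
        rw [h2]; exact idInt x' hB0
      rwa [integrable_map_measure aestronglyMeasurable_id measurable_snd.aemeasurable] at this
    have hIfst : ∫ p : ℝ × ℝ, p.1 ∂μ = mα := by
      have := MeasureTheory.integral_map (μ := μ) (φ := Prod.fst)
        measurable_fst.aemeasurable (f := (id : ℝ → ℝ)) aestronglyMeasurable_id
      rw [h1] at this
      exact this.symm
    have hIsnd : ∫ p : ℝ × ℝ, p.2 ∂μ = mβ := by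
      have := MeasureTheory.integral_map (μ := μ) (φ := Prod.snd)
        measurable_snd.aemeasurable (f := (id : ℝ → ℝ)) aestronglyMeasurable_id
      rw [h2] at this
      exact this.symm
    calc ∫ p : ℝ × ℝ, dist p.1 p.2 ∂μ = ∫ p : ℝ × ℝ, (p.2 - p.1) ∂μ :=
          integral_congr_ae hdist
      _ = (∫ p : ℝ × ℝ, p.2 ∂μ) - ∫ p : ℝ × ℝ, p.1 ∂μ := integral_sub hint2 hint1
      _ = mβ - mα := by rw [hIfst, hIsnd]
  -- the set of transport costs is a singleton
  have hset : ((fun μ : Measure (ℝ × ℝ) => ∫ p, dist p.1 p.2 ∂μ) ''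
      {μ : Measure (ℝ × ℝ) | μ.map Prod.fst = μα ∧ μ.map Prod.snd = μβ}) = {mβ - mα} := by
    apply Subset.antisymm
    · rintro v ⟨μ, ⟨h1, h2⟩, rfl⟩
      exact hval μ h1 h2
    · rintro v rfl
      refine ⟨μα.prod μβ, ⟨?_, ?_⟩, hval _ ?_ ?_⟩ <;>
        simp [Measure.map_fst_prod, Measure.map_snd_prod]
  rw [wassersteinDist, hset, csInf_singleton]
  have e1 : mα = (x + ε) - (∫ t in (x-ε)..(x+ε), ∫ s in (x-ε)..t, f s) /
      (∫ s in (x-ε)..(x+ε), f s) := aux_mean f hcont hf0 hfx hε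
  have e2 : mβ = (x' + ε) - (∫ t in (x'-ε)..(x'+ε), ∫ s in (x'-ε)..t, f s) /
      (∫ s in (x'-ε)..(x'+ε), f s) := aux_mean f hcont hf0 hfx' hε
  rw [e1, e2]
  ring
end

section
/- Let (X,d) be a compact metric space and let α be a fully supported Borel probability measure on X. Then for every pair x, x' ∈ X, d_α^{(ε)}(x,x') → d(x,x') as ε → 0. -/
open MeasureTheory Metric Set Filter

section Aux
set_option linter.unusedSectionVars false

variable {X : Type*} [MetricSpace X] [CompactSpace X] [MeasurableSpace X] [BorelSpace X]

private lemma localTrunc_isProb' (α : Measure X) [IsProbabilityMeasure α]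
    (hαfull : msupport α = Set.univ) (x : X) {ε : ℝ} (hε : 0 < ε) :
    IsProbabilityMeasure (localTrunc α ε x) := by
  have hx : x ∈ msupport α := by rw [hαfull]; trivial
  have hpos : 0 < α (closedBall x ε) := hx _ (closedBall_mem_nhds x hε)
  constructor
  simp [localTrunc, Measure.restrict_apply_univ,
    ENNReal.inv_mul_cancel hpos.ne' (measure_lt_top α _).ne]

private lemma localTrunc_compl' (α : Measure X) (x : X) (ε : ℝ) :
    localTrunc α ε x (closedBall x ε)ᶜ = 0 := by
  simp [localTrunc, Measure.restrict_apply (measurableSet_closedBall.compl)]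

private lemma wd_bounds' (α : Measure X) [IsProbabilityMeasure α]
    (hαfull : msupport α = Set.univ) (x x' : X) {ε : ℝ} (hε : 0 < ε) :
    dist x x' - 2*ε ≤ wassersteinDist (localTrunc α ε x) (localTrunc α ε x') ∧
    wassersteinDist (localTrunc α ε x) (localTrunc α ε x') ≤ dist x x' + 2*ε := by
  haveI h1 : IsProbabilityMeasure (localTrunc α ε x) := localTrunc_isProb' α hαfull x hε
  haveI h2 : IsProbabilityMeasure (localTrunc α ε x') := localTrunc_isProb' α hαfull x' hε
  set S := {μ : Measure (X × X) | μ.map Prod.fst = localTrunc α ε x ∧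
    μ.map Prod.snd = localTrunc α ε x'}
  have hdistmeas : Continuous (fun p : X × X => dist p.1 p.2) :=
    continuous_dist.comp (continuous_fst.prodMk continuous_snd)
  have key : ∀ μ ∈ S, (∀ᵐ p ∂μ, p.1 ∈ closedBall x ε ∧ p.2 ∈ closedBall x' ε) ∧
      IsProbabilityMeasure μ := by
    intro μ hμ
    have hprob : IsProbabilityMeasure μ := by
      constructor
      have := congrArg (fun m : Measure X => m Set.univ) hμ.1
      simpa [Measure.map_apply measurable_fst MeasurableSet.univ] using this
    refine ⟨?_, hprob⟩
    have hf1 : μ (Prod.fst ⁻¹' (closedBall x ε)ᶜ) = 0 := by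
      rw [← Measure.map_apply measurable_fst measurableSet_closedBall.compl, hμ.1]
      exact localTrunc_compl' α x ε
    have hf2 : μ (Prod.snd ⁻¹' (closedBall x' ε)ᶜ) = 0 := by
      rw [← Measure.map_apply measurable_snd measurableSet_closedBall.compl, hμ.2]
      exact localTrunc_compl' α x' ε
    have a1 : ∀ᵐ p ∂μ, p.1 ∈ closedBall x ε := by rw [ae_iff]; exact hf1
    have a2 : ∀ᵐ p ∂μ, p.2 ∈ closedBall x' ε := by rw [ae_iff]; exact hf2
    exact a1.and a2
  have hint : ∀ μ ∈ S, Integrable (fun p : X × X => dist p.1 p.2) μ := by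
    intro μ hμ
    obtain ⟨hae, hprob⟩ := key μ hμ
    haveI := hprob
    refine Integrable.mono' (integrable_const (dist x x' + 2*ε))
      (hdistmeas.aestronglyMeasurable) ?_
    filter_upwards [hae] with p ⟨hp1, hp2⟩
    rw [Real.norm_of_nonneg dist_nonneg]
    calc dist p.1 p.2 ≤ dist p.1 x + dist x x' + dist x' p.2 := dist_triangle4 _ _ _ _
      _ ≤ ε + dist x x' + ε := by
          gcongr
          · exact mem_closedBall.mp hp1
          · rw [dist_comm]; exact mem_closedBall.mp hp2
      _ = dist x x' + 2*ε := by ring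
  constructor
  · rw [wassersteinDist]
    apply le_csInf
    · exact ⟨_, ⟨(localTrunc α ε x).prod (localTrunc α ε x'),
        ⟨by simp [Measure.map_fst_prod], by simp [Measure.map_snd_prod]⟩, rfl⟩⟩
    · rintro v ⟨μ, hμ, rfl⟩
      obtain ⟨hae, hprob⟩ := key μ hμ
      haveI := hprob
      have hb : ∀ᵐ p ∂μ, dist x x' - 2*ε ≤ dist p.1 p.2 := by
        filter_upwards [hae] with p ⟨hp1, hp2⟩
        have := dist_triangle4 x p.1 p.2 x'
        have h1 : dist x p.1 ≤ ε := by rw [dist_comm]; exact mem_closedBall.mp hp1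
        have h2 : dist p.2 x' ≤ ε := mem_closedBall.mp hp2
        linarith
      calc dist x x' - 2*ε = ∫ _, dist x x' - 2*ε ∂μ := by
            simp [integral_const, measure_univ]
        _ ≤ ∫ p, dist p.1 p.2 ∂μ := integral_mono_ae (integrable_const _) (hint μ hμ) hb
  · rw [wassersteinDist]
    have hmem : (localTrunc α ε x).prod (localTrunc α ε x') ∈ S :=
      ⟨by simp [Measure.map_fst_prod], by simp [Measure.map_snd_prod]⟩
    have hbdd : BddBelow ((fun μ : Measure (X × X) => ∫ p, dist p.1 p.2 ∂μ) '' S) := by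
      refine ⟨0, ?_⟩
      rintro v ⟨μ, _, rfl⟩
      exact integral_nonneg fun p => dist_nonneg
    refine le_trans (csInf_le hbdd ⟨_, hmem, rfl⟩) ?_
    set μ := (localTrunc α ε x).prod (localTrunc α ε x')
    obtain ⟨hae, hprob⟩ := key μ hmem
    haveI := hprob
    have hb : ∀ᵐ p ∂μ, dist p.1 p.2 ≤ dist x x' + 2*ε := by
      filter_upwards [hae] with p ⟨hp1, hp2⟩
      have := dist_triangle4 p.1 x x' p.2
      have h1 : dist p.1 x ≤ ε := mem_closedBall.mp hp1
      have h2 : dist x' p.2 ≤ ε := by rw [dist_comm]; exact mem_closedBall.mp hp2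
      linarith
    calc ∫ p, dist p.1 p.2 ∂μ ≤ ∫ _, dist x x' + 2*ε ∂μ :=
          integral_mono_ae (hint μ hmem) (integrable_const _) hb
      _ = dist x x' + 2*ε := by simp [integral_const, measure_univ]

end Aux

/-- **Remark 3(1) of the paper**: for a fully supported Borel probability measure α on a
compact metric space, `d_α^{(ε)}(x,x') → d(x,x')` as `ε → 0⁺`, for every pair x, x'. -/
theorem wasserstein_transform_tendsto_dist
    {X : Type*} [MetricSpace X] [CompactSpace X] [MeasurableSpace X] [BorelSpace X]
    (α : Measure X) [IsProbabilityMeasure α] (hαfull : msupport α = Set.univ) :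
    ∀ x x' : X,
      Filter.Tendsto (fun ε : ℝ => wassersteinDist (localTrunc α ε x) (localTrunc α ε x'))
        (nhdsWithin 0 (Set.Ioi 0)) (nhds (dist x x')) := by
  
  intro x x'
  have hlo : Tendsto (fun ε : ℝ => dist x x' - 2*ε) (nhdsWithin 0 (Set.Ioi 0))
      (nhds (dist x x')) := by
    have : Tendsto (fun ε : ℝ => dist x x' - 2*ε) (nhds 0) (nhds (dist x x' - 2*0)) :=
      tendsto_const_nhds.sub (tendsto_id.const_mul 2)
    simpa using this.mono_left nhdsWithin_le_nhds
  have hhi : Tendsto (fun ε : ℝ => dist x x' + 2*ε) (nhdsWithin 0 (Set.Ioi 0))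
      (nhds (dist x x')) := by
    have : Tendsto (fun ε : ℝ => dist x x' + 2*ε) (nhds 0) (nhds (dist x x' + 2*0)) :=
      tendsto_const_nhds.add (tendsto_id.const_mul 2)
    simpa using this.mono_left nhdsWithin_le_nhds
  refine tendsto_of_tendsto_of_tendsto_of_le_of_le' hlo hhi ?_ ?_
  · filter_upwards [self_mem_nhdsWithin] with ε (hε : 0 < ε)
    exact (wd_bounds' α hαfull x x' hε).1
  · filter_upwards [self_mem_nhdsWithin] with ε (hε : 0 < ε)
    exact (wd_bounds' α hαfull x x' hε).2
end
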